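/- Suppose v is a vexillary permutation and let ρ(v) be the smallest partition whose Young diagram Y_{ρ(v)} contains the Rothe diagram D_v. Then for every bumpless pipe dream B ∈ BPD(v), the set of positions of crossing tiles of B is disjoint from Y_{ρ(v)}. -/

import Mathlib

/- Common definitions for formalizing "Lenart's bijection via bumpless pipe dreams"
   (Gregory–Hamaker). -/

namespace BPDPaper

/-! ### Permutations of the positive integers -/

/-- We model permutations of the positive integers as permutations of `ℕ`
(fixing `0`, with finite support). -/
abbrev Perm' := Equiv.Perm ℕ

/-- The simple transposition `s_a = t_{a,a+1}`. -/
def sT (a : ℕ) : Perm' := Equiv.swap a (a + 1)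

/-- The transposition `t_{ij}`. -/
def tT (i j : ℕ) : Perm' := Equiv.swap i j

/-- The product `s_{a_1} ⋯ s_{a_p}` of a word. -/
def wordProd (l : List ℕ) : Perm' := (l.map sT).prod

/-- `l` is a word for `w` (in the letters `s_1, s_2, …`). -/
def IsWord (w : Perm') (l : List ℕ) : Prop := (∀ x ∈ l, 1 ≤ x) ∧ wordProd l = w

/-- The Coxeter length `ℓ(w)`: the minimal length of a word for `w`. -/
noncomputable def plen (w : Perm') : ℕ :=
  sInf {m | ∃ l : List ℕ, IsWord w l ∧ l.length = m}

/-- `l` is a reduced word for `w`. -/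
def IsReducedWord (w : Perm') (l : List ℕ) : Prop := IsWord w l ∧ l.length = plen w

/-- A permutation of the positive integers: fixes `0` and all but finitely many points. -/
def IsPerm (w : Perm') : Prop := w 0 = 0 ∧ {k | w k ≠ k}.Finite

/-- `k` is a descent of `w`. -/
def Descent (w : Perm') (k : ℕ) : Prop := 1 ≤ k ∧ w (k + 1) < w k

/-- `w` is Grassmannian: at most one descent. -/
def Grassmannian (w : Perm') : Prop := IsPerm w ∧ Set.Subsingleton {k | Descent w k}

/-- `w` is vexillary: no indices `i < j < k < l` with `w j < w i < w l < w k`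
(pattern 2143 avoidance). -/
def Vexillary (w : Perm') : Prop := IsPerm w ∧
  ¬ ∃ i j k l : ℕ, 1 ≤ i ∧ i < j ∧ j < k ∧ k < l ∧ w j < w i ∧ w i < w l ∧ w l < w k

/-- The code `c_i(w) = #{j > i : w j < w i}`. -/
noncomputable def codeOf (w : Perm') (i : ℕ) : ℕ := Nat.card {j : ℕ | i < j ∧ w j < w i}

/-- Insert into a weakly decreasing list, keeping it weakly decreasing. -/
def insDesc (x : ℕ) : List ℕ → List ℕ
  | [] => [x]
  | y :: ys => if y < x then x :: y :: ys else y :: insDesc x ys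

/-- Sort a list into weakly decreasing order. -/
def sortDesc (l : List ℕ) : List ℕ := l.foldr insDesc []

/-- The shape `λ(w)`: the code `(c_1(w), …, c_n(w))` sorted decreasingly, zeros dropped
(`n` is any bound on the support of `w`). -/
noncomputable def shapeOf (w : Perm') (n : ℕ) : List ℕ :=
  (sortDesc ((List.range' 1 n).map (codeOf w))).filter (fun x => decide (0 < x))

/-- The Rothe diagram `D_w = {(i, w j) : i < j, w j < w i}` (matrix coordinates). -/
def RotheDiagram (w : Perm') : Set (ℕ × ℕ) :=
  {p | 1 ≤ p.1 ∧ ∃ j, p.1 < j ∧ w j < w p.1 ∧ p.2 = w j}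

/-- `φ_i`: the row index of the southeast-most box of `D_w` on the diagonal through
`(i, λ_i)`. -/
noncomputable def flagEntry (w : Perm') (i li : ℕ) : ℕ :=
  sSup {r : ℕ | ∃ c : ℕ, (r, c) ∈ RotheDiagram w ∧ (c : ℤ) - (r : ℤ) = (li : ℤ) - (i : ℤ)}

/-- The flag `φ(w) = (φ_1, …, φ_m)` of a vexillary permutation. -/
noncomputable def flagOf (w : Perm') (n : ℕ) : List ℕ :=
  (List.range (shapeOf w n).length).map (fun k => flagEntry w (k + 1) ((shapeOf w n).getD k 0))

/-- `ρ(w)_i`: the `i`-th row of the smallest partition whose Young diagram contains `D_w`. -/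
noncomputable def rhoRow (w : Perm') (i : ℕ) : ℕ :=
  sSup {c : ℕ | ∃ r : ℕ, i ≤ r ∧ (r, c) ∈ RotheDiagram w}

/-! ### Tableaux (lists of rows), flagged SSYT, jeu de taquin -/

/-- Semistandard Young tableau of partition shape, presented as a list of rows. -/
def IsSSYT (T : List (List ℕ)) : Prop :=
  (∀ row ∈ T, row ≠ []) ∧
  List.Chain' (fun r1 r2 : List ℕ => r2.length ≤ r1.length) T ∧
  (∀ row ∈ T, List.Chain' (· ≤ ·) row) ∧
  (∀ i j : ℕ, i + 1 < T.length → j < (T.getD (i + 1) []).length →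
    (T.getD i []).getD j 0 < (T.getD (i + 1) []).getD j 0)

/-- `φ`-flagged semistandard Young tableaux of shape `λ`: the last entry of row `i`
is at most `φ_i`. -/
def IsFlaggedSSYT (lam phi : List ℕ) (T : List (List ℕ)) : Prop :=
  IsSSYT T ∧ T.map List.length = lam ∧
  ∀ i : ℕ, i < T.length → (T.getD i []).getLastD 0 ≤ phi.getD i 0

/-- Semistandard Young tableaux with all entries at most `k` (`SSYT_k`). -/
def IsSSYTBounded (k : ℕ) (T : List (List ℕ)) : Prop :=
  IsSSYT T ∧ ∀ row ∈ T, ∀ x ∈ row, x ≤ k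

/-- Set an entry of a tableau. -/
def setEntry (T : List (List ℕ)) (r c x : ℕ) : List (List ℕ) :=
  T.set r ((T.getD r []).set c x)

/-- One jeu de taquin slide with the empty tile at `(r, c)` (0-indexed):
swap the empty tile with the smaller of the entries to its right and below
(ties move down; missing boxes are `∞`); when both are missing, delete the cell. -/
def jdtAux : ℕ → List (List ℕ) → ℕ → ℕ → List (List ℕ)
  | 0, T, _, _ => T
  | fuel + 1, T, r, c =>
    match (T.getD r [])[c + 1]?, (T.getD (r + 1) [])[c]? with
    | none, none => (T.set r ((T.getD r []).take c)).filter (fun row => !row.isEmpty)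
    | some x, none => jdtAux fuel (setEntry T r c x) r (c + 1)
    | none, some y => jdtAux fuel (setEntry T r c y) (r + 1) c
    | some x, some y =>
      if x < y then jdtAux fuel (setEntry T r c x) r (c + 1)
      else jdtAux fuel (setEntry T r c y) (r + 1) c

/-- `jdt(T)`: remove the top-left box of `T` and rectify by jeu de taquin. -/
def jdt (T : List (List ℕ)) : List (List ℕ) :=
  jdtAux ((T.map List.length).sum + 1) T 0 0

/-! ### Edelman–Greene column insertion and the recording tableau -/

/-- Edelman–Greene insertion of `x` into one increasing column `C`.
Returns the new column together with `none` (if `x` was appended, creating a new box)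
or `some y` (where `y` is to be inserted into the next column). -/
def colIns (x : ℕ) (C : List ℕ) : List ℕ × Option ℕ :=
  if C.all (fun c => decide (c < x)) then (C ++ [x], none)
  else if x ∈ C ∧ (x + 1) ∈ C then (C, some (x + 1))
  else
    match C.find? (fun c => decide (x < c)) with
    | some ck => (C.map (fun c => if c = ck then x else c), some ck)
    | none => (C, none)

/-- Edelman–Greene insertion of `x` into a tableau presented as a list of columns.
Returns the new columns and the (0-indexed) column containing the new box. -/
def egInsert : List (List ℕ) → ℕ → (List (List ℕ)) × ℕ
  | [], x => ([[x]], 0)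
  | C :: rest, x =>
    match colIns x C with
    | (C', none) => (C' :: rest, 0)
    | (C', some y) =>
      let res := egInsert rest y
      (C' :: res.1, res.2 + 1)

/-- One step of the Edelman–Greene algorithm on the pair (insertion, recording) tableau:
insert `ra.2` into `P` and record `ra.1` in the new box of `Q`. -/
def egStep (PQ : (List (List ℕ)) × (List (List ℕ))) (ra : ℕ × ℕ) :
    (List (List ℕ)) × (List (List ℕ)) :=
  let res := egInsert PQ.1 ra.2
  let Q := PQ.2
  let Q' := if res.2 < Q.length then Q.set res.2 (Q.getD res.2 [] ++ [ra.1]) else Q ++ [[ra.1]]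
  (res.1, Q')

/-- A biword `(r_1,…,r_l ; a_1,…,a_l)`. -/
structure Biword where
  top : List ℕ
  bot : List ℕ

/-- The (insertion, recording) column tableaux of a biword under Edelman–Greene insertion. -/
def egPQ (P : Biword) : (List (List ℕ)) × (List (List ℕ)) :=
  (P.top.zip P.bot).foldl egStep ([], [])

/-- Convert a tableau presented as a list of columns into a list of rows. -/
def colsToRows (cols : List (List ℕ)) : List (List ℕ) :=
  (List.range ((cols.map List.length).foldr max 0)).map
    (fun i => cols.filterMap (fun col => col[i]?))

/-- The Edelman–Greene recording tableau `Q̃` of a biword (as a list of rows). -/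
def Qtilde (P : Biword) : List (List ℕ) := colsToRows (egPQ P).2

/-- The Edelman–Greene insertion tableau `P̃` of a biword (as a list of rows). -/
def Ptilde (P : Biword) : List (List ℕ) := colsToRows (egPQ P).1

/-- `(r ; a)` is a reduced compatible sequence for `w`: `a` is a reduced word for `w`,
`r` is weakly increasing, `r_i ≤ a_i`, and `r_i < r_{i+1}` whenever `a_i < a_{i+1}`.
Membership in `PD(w)`. -/
def IsCompatible (w : Perm') (P : Biword) : Prop :=
  IsReducedWord w P.bot ∧
  List.Chain' (· ≤ ·) P.top ∧
  List.Forall₂ (· ≤ ·) P.top P.bot ∧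
  (∀ m : ℕ, m + 1 < P.bot.length →
    P.bot.getD m 0 < P.bot.getD (m + 1) 0 → P.top.getD m 0 < P.top.getD (m + 1) 0)

/-! ### Bumpless pipe dreams -/

/-- The tiles: blank, vertical, horizontal, ⌐-elbow (S–E, "r"), ⌟-elbow (W–N, "j"),
crossing, and the bump tile (for almost bumpless pipe dreams). -/
inductive Tile
  | blank | vert | horiz | se | nw | cross | bump
deriving DecidableEq

/-- A square grid of tiles; rows and columns are 1-indexed, rows increase downward. -/
structure Grid where
  n : ℕ
  tile : ℕ → ℕ → Tile

inductive Dir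
  | north | east
deriving DecidableEq

def hasN : Tile → Bool
  | .vert => true | .nw => true | .cross => true | .bump => true | _ => false
def hasS : Tile → Bool
  | .vert => true | .se => true | .cross => true | .bump => true | _ => false
def hasE : Tile → Bool
  | .horiz => true | .se => true | .cross => true | .bump => true | _ => false
def hasW : Tile → Bool
  | .horiz => true | .nw => true | .cross => true | .bump => true | _ => false

/-- The outgoing direction of a pipe through a tile, given the incoming heading
(`north` = entered through the south edge, `east` = entered through the west edge). -/
def outDir : Tile → Dir → Option Dir
  | .vert, .north => some .north
  | .cross, .north => some .north
  | .se, .north => some .east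
  | .bump, .north => some .east
  | .horiz, .east => some .east
  | .cross, .east => some .east
  | .nw, .east => some .north
  | .bump, .east => some .north
  | _, _ => none

/-- Trace a pipe; returns the row in which it exits through the east edge of the grid. -/
def traceAux (g : Grid) : ℕ → ℕ → ℕ → Dir → Option ℕ
  | 0, _, _, _ => none
  | fuel + 1, x, y, d =>
    match outDir (g.tile x y) d with
    | none => none
    | some Dir.north => if x ≤ 1 then none else traceAux g fuel (x - 1) y Dir.north
    | some Dir.east => if g.n ≤ y then some x else traceAux g fuel x (y + 1) Dir.east

/-- The exit row of the pipe entering at the bottom of column `c`. -/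
def exitRow (g : Grid) (c : ℕ) : Option ℕ := traceAux g (2 * g.n + 2) g.n c Dir.north

/-- The list of states `(row, column, heading)` visited by a pipe. -/
def pathAux (g : Grid) : ℕ → ℕ → ℕ → Dir → List (ℕ × ℕ × Dir)
  | 0, _, _, _ => []
  | fuel + 1, x, y, d =>
    (x, y, d) ::
      (match outDir (g.tile x y) d with
       | none => []
       | some Dir.north => if x ≤ 1 then [] else pathAux g fuel (x - 1) y Dir.north
       | some Dir.east => if g.n ≤ y then [] else pathAux g fuel x (y + 1) Dir.east)

/-- The path of the pipe entering at the bottom of column `c`. -/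
def pipePath (g : Grid) (c : ℕ) : List (ℕ × ℕ × Dir) := pathAux g (2 * g.n + 2) g.n c Dir.north

/-- Pipe `c` passes through position `z`. -/
def passes (g : Grid) (c : ℕ) (z : ℕ × ℕ) : Prop :=
  ∃ d : Dir, (z.1, z.2, d) ∈ pipePath g c

def InGrid (g : Grid) (i j : ℕ) : Prop := 1 ≤ i ∧ i ≤ g.n ∧ 1 ≤ j ∧ j ≤ g.n

/-- A (reduced) bumpless pipe dream: tiles match along edges; pipes enter along the
bottom and exit along the right; no bump tiles; no two pipes cross more than once.
(Tiles outside the grid are normalized to `horiz`.) -/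
def IsBPD (g : Grid) : Prop :=
  1 ≤ g.n ∧
  (∀ i j, ¬ InGrid g i j → g.tile i j = Tile.horiz) ∧
  (∀ i j, InGrid g i j → g.tile i j ≠ Tile.bump) ∧
  (∀ i j, 1 ≤ i → i < g.n → 1 ≤ j → j ≤ g.n → hasS (g.tile i j) = hasN (g.tile (i + 1) j)) ∧
  (∀ i j, 1 ≤ i → i ≤ g.n → 1 ≤ j → j < g.n → hasE (g.tile i j) = hasW (g.tile i (j + 1))) ∧
  (∀ j, 1 ≤ j → j ≤ g.n → hasN (g.tile 1 j) = false) ∧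
  (∀ j, 1 ≤ j → j ≤ g.n → hasS (g.tile g.n j) = true) ∧
  (∀ i, 1 ≤ i → i ≤ g.n → hasW (g.tile i 1) = false) ∧
  (∀ i, 1 ≤ i → i ≤ g.n → hasE (g.tile i g.n) = true) ∧
  (∀ c c', 1 ≤ c → c ≤ g.n → 1 ≤ c' → c' ≤ g.n → c ≠ c' →
    Set.Subsingleton {z : ℕ × ℕ | g.tile z.1 z.2 = Tile.cross ∧ passes g c z ∧ passes g c' z})

/-- `g ∈ BPD(w)`: `g` is a bumpless pipe dream whose permutation is `w`, i.e. the pipe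
entering at the bottom of column `c` exits to the right in row `w⁻¹(c)`. -/
def MemBPD (w : Perm') (g : Grid) : Prop :=
  IsBPD g ∧ w 0 = 0 ∧ (∀ k, g.n < k → w k = k) ∧
  (∀ c, 1 ≤ c → c ≤ g.n → exitRow g c = some (w.symm c))

/-! ### Weigandt's map γ -/

/-- The blank tiles on the diagonal `{(i,j) : j - i = d}`, from northwest to southeast. -/
def blanksOnDiag (g : Grid) (d : ℤ) : List (ℕ × ℕ) :=
  (List.range' 1 g.n).filterMap (fun (i : ℕ) =>
    let jz : ℤ := (i : ℤ) + d
    if 1 ≤ jz ∧ jz ≤ (g.n : ℤ) then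
      (if g.tile i jz.toNat = Tile.blank then some (i, jz.toNat) else none)
    else none)

/-- The number of pipes passing above position `(i,j)`: tiles above it in column `j`
in which a pipe travels eastward. -/
def pipesAbove (g : Grid) (i j : ℕ) : ℕ :=
  ((List.range' 1 g.n).filter (fun x => decide (x < i) && hasE (g.tile x j))).length

/-- Weigandt's map `γ` (for vexillary permutations): fill each blank tile with the number
of pipes above it, slide the filled tiles northwest along their diagonals into the Young
diagram of `lam`, and add `i` to every entry in row `i`. -/
def weigandt (g : Grid) (lam : List ℕ) : List (List ℕ) :=
  (List.range lam.length).map (fun (r0 : ℕ) =>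
    (List.range (lam.getD r0 0)).map (fun (c0 : ℕ) =>
      let r : ℕ := r0 + 1
      let c : ℕ := c0 + 1
      let p := (blanksOnDiag g ((c : ℤ) - (r : ℤ))).getD (min r c - 1) (0, 0)
      pipesAbove g p.1 p.2 + r))

/-! ### The Gao–Huang operator ∇, pop, and the bijection φ -/

/-- Backward tracing: enter tile `(x,y)` through its north edge (`viaN = true`) or its
east edge (`viaN = false`) and follow the pipe backwards; returns the bottom column
at which the pipe enters the grid. -/
def backAux (g : Grid) : ℕ → ℕ → ℕ → Bool → Option ℕ
  | 0, _, _, _ => none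
  | fuel + 1, x, y, viaN =>
    if g.n < x then none
    else if viaN then
      match g.tile x y with
      | .vert | .cross => if x = g.n then some y else backAux g fuel (x + 1) y true
      | .nw | .bump => backAux g fuel x (y - 1) false
      | _ => none
    else
      match g.tile x y with
      | .horiz | .cross => backAux g fuel x (y - 1) false
      | .se | .bump => if x = g.n then some y else backAux g fuel (x + 1) y true
      | _ => none

/-- The label of the pipe passing through `(x,y)` entering from the south. -/
def pipeFromS (g : Grid) (x y : ℕ) : Option ℕ :=
  if x = g.n then some y else backAux g (2 * g.n + 2) (x + 1) y true

/-- Move the mark east to the rightmost blank tile in its contiguous block of blanks. -/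
def slideEast (g : Grid) (i j : ℕ) : ℕ :=
  ((List.range' j (g.n + 1)).takeWhile (fun y => g.tile i y == Tile.blank)).getLastD j

/-- Tile rewrite for the undroop of the pipe `p` (from `(i', j+1)` into `(i, j)`)
performed in one iteration of the Gao–Huang procedure; the `(i', j+1)` case `cross → se`
is the final uncrossing step. -/
def nablaUndroop (T : ℕ → ℕ → Tile) (i i' j : ℕ) : ℕ → ℕ → Tile := fun x y =>
  let t := T x y
  if x = i ∧ y = j then (match t with | Tile.blank => Tile.se | _ => t)
  else if x = i' ∧ y = j then
    (match t with | Tile.se => Tile.vert | Tile.horiz => Tile.nw | _ => t)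
  else if x = i ∧ y = j + 1 then
    (match t with | Tile.se => Tile.horiz | Tile.vert => Tile.nw | _ => t)
  else if x = i' ∧ y = j + 1 then
    (match t with | Tile.nw => Tile.blank | Tile.cross => Tile.se | _ => t)
  else if y = j ∧ i < x ∧ x < i' then
    (match t with | Tile.blank => Tile.vert | Tile.horiz => Tile.cross | _ => t)
  else if y = j + 1 ∧ i < x ∧ x < i' then
    (match t with | Tile.vert => Tile.blank | Tile.cross => Tile.horiz | _ => t)
  else t

/-- Tile rewrite for the droop (from `(k, j)` into `(k', j+1)`) of a pipe `q` having both
a ⌐-turn and a ⌟-turn in column `j`, performed after the undroop of `p`. -/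
def nablaQDroop (T : ℕ → ℕ → Tile) (k k' j : ℕ) : ℕ → ℕ → Tile := fun x y =>
  let t := T x y
  if x = k ∧ y = j then (match t with | Tile.se => Tile.vert | _ => t)
  else if x = k' ∧ y = j then (match t with | Tile.nw => Tile.cross | _ => t)
  else if x = k ∧ y = j + 1 then (match t with | Tile.horiz => Tile.se | _ => t)
  else if x = k' ∧ y = j + 1 then (match t with | Tile.blank => Tile.nw | _ => t)
  else if y = j + 1 ∧ k < x ∧ x < k' then
    (match t with | Tile.blank => Tile.vert | Tile.horiz => Tile.cross | _ => t)
  else t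

/-- The ⌐/⌟ elbow pairs `(k, k')` of pipes in column `j` strictly between rows `i` and `i'`. -/
def qPairs (g : Grid) (i i' j : ℕ) : List (ℕ × ℕ) :=
  (List.range' 1 g.n).filterMap (fun k =>
    if i < k ∧ k < i' ∧ g.tile k j = Tile.se then
      match (List.range' 1 g.n).find?
          (fun k' => decide (k < k' ∧ k' < i' ∧ g.tile k' j = Tile.nw)) with
      | some k' => some (k, k')
      | none => none
    else none)

/-- One iteration of the marked-tile procedure on the rectangle with corners
`(i, j)` and `(i', j+1)`: undroop `p`, then droop the intersecting pipes. -/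
def nablaIter (g : Grid) (i i' j : ℕ) : Grid :=
  ⟨g.n, (qPairs g i i' j).foldl (fun T kk => nablaQDroop T kk.1 kk.2 j)
    (nablaUndroop g.tile i i' j)⟩

/-- The marked-tile loop of the Gao–Huang procedure; returns `(∇B, a)`. -/
def nablaLoop (g : Grid) : ℕ → ℕ × ℕ → Grid × ℕ
  | 0, _ => (g, 0)
  | fuel + 1, (i, j0) =>
    let j := slideEast g i j0
    match pipeFromS g i (j + 1) with
    | none => (g, 0)
    | some p =>
      if p = j + 1 then
        match (List.range' 1 g.n).find? (fun x =>
            decide (i < x) && (g.tile x (j + 1) == Tile.cross) &&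
            (backAux g (2 * g.n + 2) x (j + 1) false == some j)) with
        | some i' => (nablaIter g i i' j, j)
        | none => (g, 0)
      else
        match (List.range' 1 g.n).find? (fun x =>
            decide (i < x) && (g.tile x (j + 1) == Tile.nw)) with
        | some i' => nablaLoop (nablaIter g i i' j) fuel (i', j + 1)
        | none => (g, 0)

/-- The Gao–Huang procedure: returns `(∇B, (r, a))` where `pop(B) = (r, a)`. -/
def nablaPop (g : Grid) : Grid × ℕ × ℕ :=
  match (List.range' 1 g.n).find?
      (fun i => (List.range' 1 g.n).any (fun j => g.tile i j == Tile.blank)) with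
  | none => (g, 0, 0)
  | some r =>
    let j0 := ((List.range' 1 g.n).filter (fun j => g.tile r j == Tile.blank)).getLastD 0
    let res := nablaLoop g (g.n + 1) (r, j0)
    (res.1, r, res.2)

/-- The Gao–Huang operator `∇`. -/
def nabla (g : Grid) : Grid := (nablaPop g).1

/-- `pop(B) = (r, a)`. -/
def pop (g : Grid) : ℕ × ℕ := (nablaPop g).2

/-- The number of crossing tiles of `g` (which equals `ℓ(w)` for `g ∈ BPD(w)`). -/
def crossCount (g : Grid) : ℕ :=
  ((List.range' 1 g.n).map (fun i =>
    ((List.range' 1 g.n).filter (fun j => g.tile i j == Tile.cross)).length)).sum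

def phiAux : ℕ → Grid → List (ℕ × ℕ)
  | 0, _ => []
  | l + 1, g => pop g :: phiAux l (nabla g)

/-- The Gao–Huang bijection `φ : BPD(w) → PD(w)`,
`φ(B) = (r_1,…,r_l ; a_1,…,a_l)` with `(r_i, a_i) = pop(∇^{i-1} B)`. -/
def phi (g : Grid) : Biword :=
  ⟨(phiAux (crossCount g) g).map Prod.fst, (phiAux (crossCount g) g).map Prod.snd⟩

/-! ### Little bumps (relational) -/

/-- The reflection labelling the crossing at position `m` (0-indexed) of the word `a`:
deleting the letter at position `m` from `a` yields a word for `wordProd a * crossingRefl a m`.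
The wires `i` and `j` cross at position `m` iff `crossingRefl a m = t_{ij}`. -/
def crossingRefl (a : List ℕ) (m : ℕ) : Perm' :=
  (wordProd (a.drop (m + 1)))⁻¹ * sT (a.getD m 0) * wordProd (a.drop (m + 1))

/-- `a` is a reduced word (for its own product). -/
def IsReducedSelf (a : List ℕ) : Prop := IsReducedWord (wordProd a) a

/-- Increment the entry of `a` at position `m`. -/
def incrAt (a : List ℕ) (m : ℕ) : List ℕ := a.set m (a.getD m 0 + 1)

/-- The (upward) Little bump `L_{ij}` as a relation on biwords: starting at the position
`m_1` where wires `i` and `j` cross, repeatedly increment the current entry; stop when the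
bottom word becomes reduced, and otherwise move to the unique other position whose crossing
involves the same pair of wires. -/
def LittleBumpRel (i j : ℕ) (P P' : Biword) : Prop :=
  P'.top = P.top ∧
  ∃ ms : List ℕ, ∃ ws : List (List ℕ),
    ms ≠ [] ∧
    ws.length = ms.length + 1 ∧
    ws.getD 0 [] = P.bot ∧
    ws.getLastD [] = P'.bot ∧
    (∀ t : ℕ, t < ms.length → ws.getD (t + 1) [] = incrAt (ws.getD t []) (ms.getD t 0)) ∧
    crossingRefl P.bot (ms.getD 0 0) = tT i j ∧
    (∀ t : ℕ, t + 1 < ms.length →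
      ¬ IsReducedSelf (ws.getD (t + 1) []) ∧
      ms.getD (t + 1) 0 ≠ ms.getD t 0 ∧
      crossingRefl (ws.getD (t + 1) []) (ms.getD t 0)
        = crossingRefl (ws.getD (t + 1) []) (ms.getD (t + 1) 0)) ∧
    IsReducedSelf P'.bot

/-! ### Huang bumps -/

/-- Least offset `t ≥ 1` satisfying `p` (searched up to `bound + 1`). -/
def leastOff (p : ℕ → Bool) (bound : ℕ) : ℕ :=
  ((List.range' 1 (bound + 1)).filter p).headD 1

/-- The southeast corner `(x + k, y + l)` of the min-droop at `(x, y)`: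
`k, l ≥ 1` minimal with `(x+k, y)` and `(x, y+l)` not crossing tiles. -/
def minDroopCorner (g : Grid) (x y : ℕ) : ℕ × ℕ :=
  (x + leastOff (fun k => !(g.tile (x + k) y == Tile.cross)) g.n,
   y + leastOff (fun l => !(g.tile x (y + l) == Tile.cross)) g.n)

/-- The min-droop at `(x, y)`: droop the ⌐-turn at `(x, y)` into `(x+k, y+l)`. -/
def minDroopT (g : Grid) (x y : ℕ) : Grid :=
  let k := leastOff (fun k => !(g.tile (x + k) y == Tile.cross)) g.n
  let l := leastOff (fun l => !(g.tile x (y + l) == Tile.cross)) g.n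
  ⟨g.n, fun a b =>
    let t := g.tile a b
    if a = x ∧ b = y then
      (match t with | Tile.se => Tile.blank | Tile.bump => Tile.nw | _ => t)
    else if a = x + k ∧ b = y then (match t with | Tile.vert => Tile.se | _ => t)
    else if a = x ∧ b = y + l then
      (match t with | Tile.horiz => Tile.se | Tile.nw => Tile.vert | _ => t)
    else if a = x + k ∧ b = y + l then
      (match t with | Tile.blank => Tile.nw | Tile.se => Tile.bump | _ => t)
    else if b = y ∧ x < a ∧ a < x + k then
      (match t with | Tile.cross => Tile.horiz | Tile.vert => Tile.blank | _ => t)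
    else if a = x ∧ y < b ∧ b < y + l then
      (match t with | Tile.cross => Tile.vert | Tile.horiz => Tile.blank | _ => t)
    else if a = x + k ∧ y < b ∧ b < y + l then
      (match t with | Tile.blank => Tile.horiz | Tile.vert => Tile.cross | _ => t)
    else if b = y + l ∧ x < a ∧ a < x + k then
      (match t with | Tile.blank => Tile.vert | Tile.horiz => Tile.cross | _ => t)
    else t⟩

/-- Replace a single tile. -/
def setTile (g : Grid) (x y : ℕ) (t : Tile) : Grid :=
  ⟨g.n, fun a b => if a = x ∧ b = y then t else g.tile a b⟩

/-- Pipe `c` passes through `(x, y)` (Boolean). -/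
def onPath (g : Grid) (c : ℕ) (x y : ℕ) : Bool :=
  decide ((x, y, Dir.north) ∈ pipePath g c) || decide ((x, y, Dir.east) ∈ pipePath g c)

/-- The position of the crossing tile where pipes `c` and `c'` cross, if any. -/
def findCrossing (g : Grid) (c c' : ℕ) : Option (ℕ × ℕ) :=
  (pipePath g c).findSome? (fun s =>
    if (g.tile s.1 s.2.1 == Tile.cross) && onPath g c' s.1 s.2.1 then some (s.1, s.2.1)
    else none)

/-- The column of the ⌐-turn of pipe `c` in row `row`, if any. -/
def seTurnCol (g : Grid) (c row : ℕ) : Option ℕ :=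
  (pipePath g c).findSome? (fun s =>
    if s.1 = row ∧ s.2.2 = Dir.north ∧
        (g.tile s.1 s.2.1 = Tile.se ∨ g.tile s.1 s.2.1 = Tile.bump) then some s.2.1
    else none)

/-- The iteration of the Huang bump: min-droops and cross-bump-swaps until a bump tile
is turned into a crossing tile. -/
def huangLoop (iPipe : ℕ) : ℕ → Grid → ℕ × ℕ → Grid
  | 0, g, _ => g
  | fuel + 1, g, (x, y) =>
    let c := minDroopCorner g x y
    let g1 := minDroopT g x y
    match g1.tile c.1 c.2 with
    | Tile.nw =>
      match seTurnCol g1 iPipe c.1 with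
      | some col => huangLoop iPipe fuel g1 (c.1, col)
      | none => g1
    | Tile.bump =>
      match backAux g1 (2 * g1.n + 2) c.1 c.2 false with
      | some q =>
        match findCrossing g1 iPipe q with
        | some z =>
          huangLoop iPipe fuel (setTile (setTile g1 c.1 c.2 Tile.cross) z.1 z.2 Tile.bump) z
        | none => setTile g1 c.1 c.2 Tile.cross
      | none => g1
    | _ => g1

/-- Fuel exceeding the number of states of the procedure. -/
def huangFuel (g : Grid) : ℕ := 7 ^ (g.n * g.n) * (g.n * g.n) + 2

/-- The Huang bump `H_{ij}`: replace the crossing of pipes `i` and `j` by a bump tile,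
then repeatedly min-droop and cross-bump-swap until a new crossing tile is created. -/
def huang (i j : ℕ) (g : Grid) : Grid :=
  match findCrossing g i j with
  | some z => huangLoop i (huangFuel g) (setTile g z.1 z.2 Tile.bump) z
  | none => g


/-! ### Auxiliary lemmas for Statement 12 -/

lemma pathAux_succ_none {g : Grid} {x y : ℕ} {d : Dir} (f : ℕ)
    (hod : outDir (g.tile x y) d = none) :
    pathAux g (f + 1) x y d = [(x, y, d)] := by
  rw [pathAux, hod]

lemma pathAux_succ_north {g : Grid} {x y : ℕ} {d : Dir} (f : ℕ)
    (hod : outDir (g.tile x y) d = some Dir.north) (hx : ¬ x ≤ 1) :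
    pathAux g (f + 1) x y d = (x, y, d) :: pathAux g f (x - 1) y Dir.north := by
  rw [pathAux, hod]; simp [hx]

lemma pathAux_succ_stopN {g : Grid} {x y : ℕ} {d : Dir} (f : ℕ)
    (hod : outDir (g.tile x y) d = some Dir.north) (hx : x ≤ 1) :
    pathAux g (f + 1) x y d = [(x, y, d)] := by
  rw [pathAux, hod]; simp [hx]

lemma pathAux_succ_east {g : Grid} {x y : ℕ} {d : Dir} (f : ℕ)
    (hod : outDir (g.tile x y) d = some Dir.east) (hy : ¬ g.n ≤ y) :
    pathAux g (f + 1) x y d = (x, y, d) :: pathAux g f x (y + 1) Dir.east := by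
  rw [pathAux, hod]; simp [hy]

lemma pathAux_succ_stopE {g : Grid} {x y : ℕ} {d : Dir} (f : ℕ)
    (hod : outDir (g.tile x y) d = some Dir.east) (hy : g.n ≤ y) :
    pathAux g (f + 1) x y d = [(x, y, d)] := by
  rw [pathAux, hod]; simp [hy]

lemma traceAux_succ_none {g : Grid} {x y : ℕ} {d : Dir} (f : ℕ)
    (hod : outDir (g.tile x y) d = none) :
    traceAux g (f + 1) x y d = none := by
  rw [traceAux, hod]

lemma traceAux_succ_north {g : Grid} {x y : ℕ} {d : Dir} (f : ℕ)
    (hod : outDir (g.tile x y) d = some Dir.north) (hx : ¬ x ≤ 1) :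
    traceAux g (f + 1) x y d = traceAux g f (x - 1) y Dir.north := by
  rw [traceAux, hod]; simp [hx]

lemma traceAux_succ_stopN {g : Grid} {x y : ℕ} {d : Dir} (f : ℕ)
    (hod : outDir (g.tile x y) d = some Dir.north) (hx : x ≤ 1) :
    traceAux g (f + 1) x y d = none := by
  rw [traceAux, hod]; simp [hx]

lemma traceAux_succ_east {g : Grid} {x y : ℕ} {d : Dir} (f : ℕ)
    (hod : outDir (g.tile x y) d = some Dir.east) (hy : ¬ g.n ≤ y) :
    traceAux g (f + 1) x y d = traceAux g f x (y + 1) Dir.east := by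
  rw [traceAux, hod]; simp [hy]

lemma traceAux_succ_stopE {g : Grid} {x y : ℕ} {d : Dir} (f : ℕ)
    (hod : outDir (g.tile x y) d = some Dir.east) (hy : g.n ≤ y) :
    traceAux g (f + 1) x y d = some x := by
  rw [traceAux, hod]; simp [hy]

/-- Basic invariants along a pipe path, together with a "suffix" property. -/
lemma path_inv (g : Grid) : ∀ (f x0 y0 : ℕ) (d0 : Dir), 1 ≤ x0 → x0 ≤ g.n → 1 ≤ y0 → y0 ≤ g.n →
    ∀ s ∈ pathAux g f x0 y0 d0,
      1 ≤ s.1 ∧ s.1 ≤ x0 ∧ y0 ≤ s.2.1 ∧ s.2.1 ≤ g.n ∧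
      (d0 = Dir.north → s.2.2 = Dir.east → y0 < s.2.1) ∧
      ∃ f' : ℕ, 1 ≤ f' ∧ (f' : ℤ) + ((s.2.1 : ℤ) - (s.1 : ℤ)) = (f : ℤ) + ((y0 : ℤ) - (x0 : ℤ)) ∧
        ∀ z ∈ pathAux g f' s.1 s.2.1 s.2.2, z ∈ pathAux g f x0 y0 d0 := by
  intro f
  induction f with
  | zero => intro x0 y0 d0 _ _ _ _ s hs; simp [pathAux] at hs
  | succ f ih =>
    intro x0 y0 d0 hx1 hx2 hy1 hy2 s hs
    rcases hod : outDir (g.tile x0 y0) d0 with _ | d'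
    · rw [pathAux_succ_none f hod] at hs
      simp at hs
      subst hs
      exact ⟨hx1, le_rfl, le_rfl, hy2, (fun h1 h2 => by rw [h1] at h2; cases h2),
        f + 1, by omega, (by push_cast; ring), (by rw [pathAux_succ_none f hod]; exact fun z hz => hz)⟩
    · cases d' with
      | north =>
        by_cases hx : x0 ≤ 1
        · rw [pathAux_succ_stopN f hod hx] at hs
          simp at hs
          subst hs
          exact ⟨hx1, le_rfl, le_rfl, hy2, (fun h1 h2 => by rw [h1] at h2; cases h2),
            f + 1, by omega, (by push_cast; ring),
            (by rw [pathAux_succ_stopN f hod hx]; exact fun z hz => hz)⟩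
        · rw [pathAux_succ_north f hod hx] at hs
          rcases List.mem_cons.mp hs with h | h
          · subst h
            exact ⟨hx1, le_rfl, le_rfl, hy2, (fun h1 h2 => by rw [h1] at h2; cases h2),
              f + 1, by omega, (by push_cast; ring),
              (by rw [pathAux_succ_north f hod hx]; exact fun z hz => hz)⟩
          · obtain ⟨i1, i2, i3, i4, i5, f', hf1, hf2, hsub⟩ :=
              ih (x0 - 1) y0 Dir.north (by omega) (by omega) hy1 hy2 s h
            refine ⟨i1, by omega, i3, i4, fun _ h2 => i5 rfl h2, f', hf1, (by omega),
              fun z hz => ?_⟩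
            rw [pathAux_succ_north f hod hx]
            exact List.mem_cons_of_mem _ (hsub z hz)
      | east =>
        by_cases hy : g.n ≤ y0
        · rw [pathAux_succ_stopE f hod hy] at hs
          simp at hs
          subst hs
          exact ⟨hx1, le_rfl, le_rfl, hy2, (fun h1 h2 => by rw [h1] at h2; cases h2),
            f + 1, by omega, (by push_cast; ring),
            (by rw [pathAux_succ_stopE f hod hy]; exact fun z hz => hz)⟩
        · rw [pathAux_succ_east f hod hy] at hs
          rcases List.mem_cons.mp hs with h | h
          · subst h
            exact ⟨hx1, le_rfl, le_rfl, hy2, (fun h1 h2 => by rw [h1] at h2; cases h2),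
              f + 1, by omega, (by push_cast; ring),
              (by rw [pathAux_succ_east f hod hy]; exact fun z hz => hz)⟩
          · obtain ⟨i1, i2, i3, i4, i5, f', hf1, hf2, hsub⟩ :=
              ih x0 (y0 + 1) Dir.east hx1 hx2 (by omega) (by omega) s h
            refine ⟨i1, i2, (by omega), i4, (fun _ _ => by omega), f', hf1, (by omega),
              fun z hz => ?_⟩
            rw [pathAux_succ_east f hod hy]
            exact List.mem_cons_of_mem _ (hsub z hz)


/-- Successor states along a pipe path (northward). -/
lemma mem_succ_north {g : Grid} {c x y : ℕ} {d : Dir} (hn : 1 ≤ g.n)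
    (hc1 : 1 ≤ c) (hc2 : c ≤ g.n) (hs : (x, y, d) ∈ pipePath g c)
    (hod : outDir (g.tile x y) d = some Dir.north) (hx : 1 < x) :
    (x - 1, y, Dir.north) ∈ pipePath g c := by
  obtain ⟨i1, i2, i3, i4, _, f', hf1, hf2, hsub⟩ :=
    path_inv g (2 * g.n + 2) g.n c Dir.north hn le_rfl hc1 hc2 _ hs
  simp only at i1 i2 i3 i4 hf2 hsub
  have hf2' : 2 ≤ f' := by omega
  apply hsub
  obtain ⟨f'', rfl⟩ : ∃ f'', f' = f'' + 1 + 1 := ⟨f' - 2, by omega⟩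
  rw [pathAux_succ_north (f'' + 1) hod (by omega)]
  apply List.mem_cons_of_mem
  rw [pathAux]
  exact List.mem_cons_self

/-- Successor states along a pipe path (eastward). -/
lemma mem_succ_east {g : Grid} {c x y : ℕ} {d : Dir} (hn : 1 ≤ g.n)
    (hc1 : 1 ≤ c) (hc2 : c ≤ g.n) (hs : (x, y, d) ∈ pipePath g c)
    (hod : outDir (g.tile x y) d = some Dir.east) (hy : y < g.n) :
    (x, y + 1, Dir.east) ∈ pipePath g c := by
  obtain ⟨i1, i2, i3, i4, _, f', hf1, hf2, hsub⟩ :=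
    path_inv g (2 * g.n + 2) g.n c Dir.north hn le_rfl hc1 hc2 _ hs
  simp only at i1 i2 i3 i4 hf2 hsub
  have hf2' : 2 ≤ f' := by omega
  apply hsub
  obtain ⟨f'', rfl⟩ : ∃ f'', f' = f'' + 1 + 1 := ⟨f' - 2, by omega⟩
  rw [pathAux_succ_east (f'' + 1) hod (by omega)]
  apply List.mem_cons_of_mem
  rw [pathAux]
  exact List.mem_cons_self

/-- Two states of the same pipe path on the same antidiagonal are equal. -/
lemma mu_inj (g : Grid) : ∀ (f x0 y0 : ℕ) (d0 : Dir), 1 ≤ x0 → x0 ≤ g.n → 1 ≤ y0 → y0 ≤ g.n →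
    ∀ s ∈ pathAux g f x0 y0 d0, ∀ s' ∈ pathAux g f x0 y0 d0,
      (s.2.1 : ℤ) - (s.1 : ℤ) = (s'.2.1 : ℤ) - (s'.1 : ℤ) → s = s' := by
  intro f
  induction f with
  | zero => intro x0 y0 d0 _ _ _ _ s hs; simp [pathAux] at hs
  | succ f ih =>
    intro x0 y0 d0 hx1 hx2 hy1 hy2 s hs s' hs' hmu
    rcases hod : outDir (g.tile x0 y0) d0 with _ | d'
    · rw [pathAux_succ_none f hod] at hs hs'
      simp at hs hs'; rw [hs, hs']
    · cases d' with
      | north =>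
        by_cases hx : x0 ≤ 1
        · rw [pathAux_succ_stopN f hod hx] at hs hs'
          simp at hs hs'; rw [hs, hs']
        · rw [pathAux_succ_north f hod hx] at hs hs'
          have htail : ∀ z ∈ pathAux g f (x0 - 1) y0 Dir.north,
              (y0 : ℤ) - (x0 : ℤ) < (z.2.1 : ℤ) - (z.1 : ℤ) := by
            intro z hz
            obtain ⟨j1, j2, j3, j4, _, _⟩ :=
              path_inv g f (x0 - 1) y0 Dir.north (by omega) (by omega) hy1 hy2 z hz
            omega
          rcases List.mem_cons.mp hs with h | h <;> rcases List.mem_cons.mp hs' with h' | h'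
          · rw [h, h']
          · exfalso; have := htail s' h'; rw [h] at hmu; simp at hmu; omega
          · exfalso; have := htail s h; rw [h'] at hmu; simp at hmu; omega
          · exact ih (x0 - 1) y0 Dir.north (by omega) (by omega) hy1 hy2 s h s' h' hmu
      | east =>
        by_cases hy : g.n ≤ y0
        · rw [pathAux_succ_stopE f hod hy] at hs hs'
          simp at hs hs'; rw [hs, hs']
        · rw [pathAux_succ_east f hod hy] at hs hs'
          have htail : ∀ z ∈ pathAux g f x0 (y0 + 1) Dir.east,
              (y0 : ℤ) - (x0 : ℤ) < (z.2.1 : ℤ) - (z.1 : ℤ) := by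
            intro z hz
            obtain ⟨j1, j2, j3, j4, _, _⟩ :=
              path_inv g f x0 (y0 + 1) Dir.east hx1 hx2 (by omega) (by omega) z hz
            omega
          rcases List.mem_cons.mp hs with h | h <;> rcases List.mem_cons.mp hs' with h' | h'
          · rw [h, h']
          · exfalso; have := htail s' h'; rw [h] at hmu; simp at hmu; omega
          · exfalso; have := htail s h; rw [h'] at hmu; simp at hmu; omega
          · exact ih x0 (y0 + 1) Dir.east hx1 hx2 (by omega) (by omega) s h s' h' hmu


/-- The exit row is at most the current row. -/
lemma trace_le (g : Grid) : ∀ (f x y : ℕ) (d : Dir) (e : ℕ),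
    traceAux g f x y d = some e → e ≤ x := by
  intro f
  induction f with
  | zero => intro x y d e h; simp [traceAux] at h
  | succ f ih =>
    intro x y d e h
    rcases hod : outDir (g.tile x y) d with _ | d'
    · rw [traceAux_succ_none f hod] at h; cases h
    · cases d' with
      | north =>
        by_cases hx : x ≤ 1
        · rw [traceAux_succ_stopN f hod hx] at h; cases h
        · rw [traceAux_succ_north f hod hx] at h
          have := ih _ _ _ _ h; omega
      | east =>
        by_cases hy : g.n ≤ y
        · rw [traceAux_succ_stopE f hod hy] at h
          simp at h; omega
        · rw [traceAux_succ_east f hod hy] at h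
          exact ih _ _ _ _ h

/-- The trace result does not depend on (sufficient) fuel. -/
lemma trace_det (g : Grid) : ∀ (f f' x y : ℕ) (d : Dir) (e e' : ℕ),
    traceAux g f x y d = some e → traceAux g f' x y d = some e' → e = e' := by
  intro f
  induction f with
  | zero => intro f' x y d e e' h; simp [traceAux] at h
  | succ f ih =>
    intro f' x y d e e' h h'
    rcases f' with _ | f'
    · simp [traceAux] at h'
    · rcases hod : outDir (g.tile x y) d with _ | d'
      · rw [traceAux_succ_none f hod] at h; cases h
      · cases d' with
        | north =>
          by_cases hx : x ≤ 1
          · rw [traceAux_succ_stopN f hod hx] at h; cases h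
          · rw [traceAux_succ_north f hod hx] at h
            rw [traceAux_succ_north f' hod hx] at h'
            exact ih _ _ _ _ _ _ h h'
        | east =>
          by_cases hy : g.n ≤ y
          · rw [traceAux_succ_stopE f hod hy] at h
            rw [traceAux_succ_stopE f' hod hy] at h'
            simp at h h'; omega
          · rw [traceAux_succ_east f hod hy] at h
            rw [traceAux_succ_east f' hod hy] at h'
            exact ih _ _ _ _ _ _ h h'

/-- If the trace exits, the exit state is on the path. -/
lemma trace_exit (g : Grid) : ∀ (f x y : ℕ) (d : Dir) (e : ℕ), y ≤ g.n →
    traceAux g f x y d = some e →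
    ∃ d', (e, g.n, d') ∈ pathAux g f x y d ∧ outDir (g.tile e g.n) d' = some Dir.east := by
  intro f
  induction f with
  | zero => intro x y d e _ h; simp [traceAux] at h
  | succ f ih =>
    intro x y d e hyn h
    rcases hod : outDir (g.tile x y) d with _ | d'
    · rw [traceAux_succ_none f hod] at h; cases h
    · cases d' with
      | north =>
        by_cases hx : x ≤ 1
        · rw [traceAux_succ_stopN f hod hx] at h; cases h
        · rw [traceAux_succ_north f hod hx] at h
          obtain ⟨d', hm, ho⟩ := ih _ _ _ _ hyn h
          exact ⟨d', by rw [pathAux_succ_north f hod hx]; exact List.mem_cons_of_mem _ hm, ho⟩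
      | east =>
        by_cases hy : g.n ≤ y
        · rw [traceAux_succ_stopE f hod hy] at h
          simp at h
          have hyn' : y = g.n := le_antisymm hyn hy
          refine ⟨d, ?_, ?_⟩
          · rw [pathAux_succ_stopE f hod hy]; simp [← h, hyn']
          · rw [← hyn', ← h]; exact hod
        · rw [traceAux_succ_east f hod hy] at h
          obtain ⟨d', hm, ho⟩ := ih _ _ _ _ (by omega) h
          exact ⟨d', by rw [pathAux_succ_east f hod hy]; exact List.mem_cons_of_mem _ hm, ho⟩

/-- The trace from any state on the path yields the same exit row. -/
lemma trace_from (g : Grid) : ∀ (f x y : ℕ) (d : Dir) (e : ℕ),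
    traceAux g f x y d = some e →
    ∀ s ∈ pathAux g f x y d, ∃ f', traceAux g f' s.1 s.2.1 s.2.2 = some e := by
  intro f
  induction f with
  | zero => intro x y d e h; simp [traceAux] at h
  | succ f ih =>
    intro x y d e h s hs
    rcases hod : outDir (g.tile x y) d with _ | d'
    · rw [traceAux_succ_none f hod] at h; cases h
    · cases d' with
      | north =>
        by_cases hx : x ≤ 1
        · rw [traceAux_succ_stopN f hod hx] at h; cases h
        · rw [traceAux_succ_north f hod hx] at h
          rw [pathAux_succ_north f hod hx] at hs
          rcases List.mem_cons.mp hs with hh | hh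
          · subst hh; exact ⟨f + 1, by rw [traceAux_succ_north f hod hx]; exact h⟩
          · exact ih _ _ _ _ h s hh
      | east =>
        by_cases hy : g.n ≤ y
        · rw [traceAux_succ_stopE f hod hy] at h
          rw [pathAux_succ_stopE f hod hy] at hs
          simp at hs h
          subst hs
          exact ⟨f + 1, by rw [traceAux_succ_stopE f hod hy]; simp [h]⟩
        · rw [traceAux_succ_east f hod hy] at h
          rw [pathAux_succ_east f hod hy] at hs
          rcases List.mem_cons.mp hs with hh | hh
          · subst hh; exact ⟨f + 1, by rw [traceAux_succ_east f hod hy]; exact h⟩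
          · exact ih _ _ _ _ h s hh


/-- The start state is on the pipe path. -/
lemma start_mem (g : Grid) (c : ℕ) : (g.n, c, Dir.north) ∈ pipePath g c := by
  show _ ∈ pathAux g (2 * g.n + 2) g.n c Dir.north
  have h : 2 * g.n + 2 = (2 * g.n + 1) + 1 := rfl
  rw [h, pathAux]
  exact List.mem_cons_self

/-- Every south edge / west edge of a tile is on some pipe. -/
lemma coverage (g : Grid) (hb : IsBPD g) :
    ∀ (k x y : ℕ), 1 ≤ x → x ≤ g.n → 1 ≤ y → y ≤ g.n → y + g.n = k + x →
    (hasS (g.tile x y) = true → ∃ c, 1 ≤ c ∧ c ≤ g.n ∧ (x, y, Dir.north) ∈ pipePath g c) ∧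
    (hasW (g.tile x y) = true → ∃ c, 1 ≤ c ∧ c ≤ g.n ∧ (x, y, Dir.east) ∈ pipePath g c) := by
  obtain ⟨hn, hout, hnb, hSN, hEW, htop, hbot, hleft, hright, hsub⟩ := hb
  intro k
  induction k using Nat.strong_induction_on with
  | _ k ih =>
  intro x y hx1 hx2 hy1 hy2 hk
  constructor
  · intro hS
    rcases eq_or_lt_of_le hx2 with heq | hlt
    · exact ⟨y, hy1, hy2, by rw [heq]; exact start_mem g y⟩
    · have hN : hasN (g.tile (x + 1) y) = true := by
        rw [← hSN x y hx1 hlt hy1 hy2]; exact hS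
      have hrec := ih (k - 1) (by omega) (x + 1) y (by omega) (by omega) hy1 hy2 (by omega)
      rcases ht : g.tile (x + 1) y with _ | _ | _ | _ | _ | _ | _
      · rw [ht] at hN; simp [hasN] at hN
      · obtain ⟨c, hc1, hc2, hm⟩ := hrec.1 (by rw [ht]; rfl)
        have := mem_succ_north hn hc1 hc2 hm (by rw [ht]; rfl) (by omega)
        exact ⟨c, hc1, hc2, by simpa using this⟩
      · rw [ht] at hN; simp [hasN] at hN
      · rw [ht] at hN; simp [hasN] at hN
      · obtain ⟨c, hc1, hc2, hm⟩ := hrec.2 (by rw [ht]; rfl)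
        have := mem_succ_north hn hc1 hc2 hm (by rw [ht]; rfl) (by omega)
        exact ⟨c, hc1, hc2, by simpa using this⟩
      · obtain ⟨c, hc1, hc2, hm⟩ := hrec.1 (by rw [ht]; rfl)
        have := mem_succ_north hn hc1 hc2 hm (by rw [ht]; rfl) (by omega)
        exact ⟨c, hc1, hc2, by simpa using this⟩
      · exact absurd ht (hnb (x + 1) y ⟨by omega, by omega, hy1, hy2⟩)
  · intro hW
    rcases eq_or_lt_of_le hy1 with heq | hlt
    · exfalso; rw [← heq] at hW; rw [hleft x hx1 hx2] at hW; cases hW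
    · have hy' : y - 1 + 1 = y := by omega
      have hE : hasE (g.tile x (y - 1)) = true := by
        have := hEW x (y - 1) hx1 hx2 (by omega) (by omega)
        rw [hy'] at this; rw [this]; exact hW
      have hrec := ih (k - 1) (by omega) x (y - 1) hx1 hx2 (by omega) (by omega) (by omega)
      rcases ht : g.tile x (y - 1) with _ | _ | _ | _ | _ | _ | _
      · rw [ht] at hE; simp [hasE] at hE
      · rw [ht] at hE; simp [hasE] at hE
      · obtain ⟨c, hc1, hc2, hm⟩ := hrec.2 (by rw [ht]; rfl)
        have := mem_succ_east hn hc1 hc2 hm (by rw [ht]; rfl) (by omega)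
        rw [hy'] at this
        exact ⟨c, hc1, hc2, this⟩
      · obtain ⟨c, hc1, hc2, hm⟩ := hrec.1 (by rw [ht]; rfl)
        have := mem_succ_east hn hc1 hc2 hm (by rw [ht]; rfl) (by omega)
        rw [hy'] at this
        exact ⟨c, hc1, hc2, this⟩
      · rw [ht] at hE; simp [hasE] at hE
      · obtain ⟨c, hc1, hc2, hm⟩ := hrec.2 (by rw [ht]; rfl)
        have := mem_succ_east hn hc1 hc2 hm (by rw [ht]; rfl) (by omega)
        rw [hy'] at this
        exact ⟨c, hc1, hc2, this⟩
      · exact absurd ht (hnb x (y - 1) ⟨hx1, hx2, by omega, by omega⟩)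

/-- Existence of a state of the pipe on every antidiagonal level between start and exit. -/
lemma level_state (g : Grid) (hn : 1 ≤ g.n) (c e : ℕ) (hc1 : 1 ≤ c) (hc2 : c ≤ g.n)
    (he : traceAux g (2 * g.n + 2) g.n c Dir.north = some e) :
    ∀ k : ℕ, (c : ℤ) - g.n + k ≤ (g.n : ℤ) - e →
      ∃ s ∈ pipePath g c, (s.2.1 : ℤ) - (s.1 : ℤ) = (c : ℤ) - g.n + k := by
  intro k
  induction k with
  | zero => intro _; exact ⟨(g.n, c, Dir.north), start_mem g c, by simp⟩
  | succ k ihk =>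
    intro hk
    obtain ⟨s, hs, hmu⟩ := ihk (by omega)
    obtain ⟨f', hf'⟩ := trace_from g _ _ _ _ _ he s hs
    obtain ⟨i1, i2, i3, i4, _, _⟩ := path_inv g _ _ _ _ hn le_rfl hc1 hc2 s hs
    rcases f' with _ | f'
    · simp [traceAux] at hf'
    rcases hod : outDir (g.tile s.1 s.2.1) s.2.2 with _ | d'
    · rw [traceAux_succ_none f' hod] at hf'; cases hf'
    · cases d' with
      | north =>
        by_cases hx : s.1 ≤ 1
        · rw [traceAux_succ_stopN f' hod hx] at hf'; cases hf'
        · have hm := mem_succ_north hn hc1 hc2 hs hod (lt_of_not_ge hx)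
          exact ⟨(s.1 - 1, s.2.1, Dir.north), hm, by simp; omega⟩
      | east =>
        by_cases hy : g.n ≤ s.2.1
        · rw [traceAux_succ_stopE f' hod hy] at hf'
          simp at hf'
          exfalso; omega
        · have hm := mem_succ_east hn hc1 hc2 hs hod (lt_of_not_ge hy)
          exact ⟨(s.1, s.2.1 + 1, Dir.east), hm, by simp; omega⟩


/-- Discrete intermediate value theorem (positive to nonpositive). -/
lemma ivt_pos_neg (D : ℤ → ℤ) (a b : ℤ) (hab : a ≤ b)
    (hstep : ∀ t, a ≤ t → t < b → D (t + 1) ≤ D t + 1 ∧ D t ≤ D (t + 1) + 1)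
    (ha : 0 < D a) (hb : D b ≤ 0) : ∃ t, a < t ∧ t ≤ b ∧ D t = 0 := by
  by_contra hcon
  push_neg at hcon
  have key : ∀ k : ℕ, a + (k : ℤ) ≤ b → 0 < D (a + (k : ℤ)) := by
    intro k
    induction k with
    | zero => intro _; simpa using ha
    | succ k ih =>
      intro hkb
      have hcast : ((k + 1 : ℕ) : ℤ) = (k : ℤ) + 1 := by push_cast; ring
      rw [hcast] at hkb ⊢
      have h1 : 0 < D (a + (k : ℤ)) := ih (by omega)
      have h2 := hstep (a + (k : ℤ)) (by omega) (by omega)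
      have hne := hcon (a + ((k : ℤ) + 1)) (by omega) hkb
      have heq : a + ((k : ℤ) + 1) = (a + (k : ℤ)) + 1 := by ring
      rw [heq] at hne ⊢
      omega
  have h4 := key (b - a).toNat (by omega)
  have h5 : a + (((b - a).toNat : ℕ) : ℤ) = b := by omega
  rw [h5] at h4
  omega

/-- Discrete intermediate value theorem (nonpositive to positive). -/
lemma ivt_neg_pos (D : ℤ → ℤ) (a b : ℤ) (hab : a ≤ b)
    (hstep : ∀ t, a ≤ t → t < b → D (t + 1) ≤ D t + 1 ∧ D t ≤ D (t + 1) + 1)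
    (ha : D a ≤ 0) (hb : 0 < D b) : ∃ t, a ≤ t ∧ t < b ∧ D t = 0 := by
  have hstep' : ∀ t, a ≤ t → t < b →
      D (a + b - (t + 1)) ≤ D (a + b - t) + 1 ∧ D (a + b - t) ≤ D (a + b - (t + 1)) + 1 := by
    intro t ht1 ht2
    have h := hstep (a + b - t - 1) (by omega) (by omega)
    have e1 : a + b - (t + 1) = a + b - t - 1 := by ring
    have e3 : a + b - t - 1 + 1 = a + b - t := by ring
    rw [e3] at h
    rw [e1]
    exact ⟨h.2, h.1⟩
  obtain ⟨t, h1, h2, h3⟩ := ivt_pos_neg (fun t => D (a + b - t)) a b hab hstep'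
    (by simpa using hb) (by simpa using ha)
  exact ⟨a + b - t, by omega, by omega, h3⟩

/-- Identification of path states by their antidiagonal level. -/
lemma st_eq (g : Grid) (hn : 1 ≤ g.n) (c e : ℕ) (hc1 : 1 ≤ c) (hc2 : c ≤ g.n)
    (he : traceAux g (2 * g.n + 2) g.n c Dir.north = some e)
    (st : ℤ → ℕ × ℕ × Dir)
    (hst : ∀ t : ℤ, (c : ℤ) - g.n ≤ t → t ≤ (g.n : ℤ) - e →
      st t ∈ pipePath g c ∧ ((st t).2.1 : ℤ) - ((st t).1 : ℤ) = t) :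
    ∀ s ∈ pipePath g c, s = st ((s.2.1 : ℤ) - (s.1 : ℤ)) := by
  intro s hs
  obtain ⟨i1, i2, i3, i4, _, _⟩ := path_inv g _ _ _ _ hn le_rfl hc1 hc2 s hs
  obtain ⟨f', hf'⟩ := trace_from g _ _ _ _ _ he s hs
  have hle := trace_le g f' s.1 s.2.1 s.2.2 e hf'
  have hb1 : (c : ℤ) - g.n ≤ (s.2.1 : ℤ) - (s.1 : ℤ) := by omega
  have hb2 : (s.2.1 : ℤ) - (s.1 : ℤ) ≤ (g.n : ℤ) - e := by omega
  obtain ⟨hmem, hmu⟩ := hst _ hb1 hb2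
  exact mu_inj g _ _ _ _ hn le_rfl hc1 hc2 s hs _ hmem (by omega)

/-- The start state of the level function. -/
lemma st_lo (g : Grid) (hn : 1 ≤ g.n) (c e : ℕ) (hc1 : 1 ≤ c) (hc2 : c ≤ g.n)
    (he : traceAux g (2 * g.n + 2) g.n c Dir.north = some e)
    (st : ℤ → ℕ × ℕ × Dir)
    (hst : ∀ t : ℤ, (c : ℤ) - g.n ≤ t → t ≤ (g.n : ℤ) - e →
      st t ∈ pipePath g c ∧ ((st t).2.1 : ℤ) - ((st t).1 : ℤ) = t) :
    st ((c : ℤ) - g.n) = (g.n, c, Dir.north) := by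
  have h := st_eq g hn c e hc1 hc2 he st hst _ (start_mem g c)
  simp at h
  exact h.symm

/-- The exit state of the level function. -/
lemma st_hi (g : Grid) (hn : 1 ≤ g.n) (c e : ℕ) (hc1 : 1 ≤ c) (hc2 : c ≤ g.n)
    (he : traceAux g (2 * g.n + 2) g.n c Dir.north = some e)
    (st : ℤ → ℕ × ℕ × Dir)
    (hst : ∀ t : ℤ, (c : ℤ) - g.n ≤ t → t ≤ (g.n : ℤ) - e →
      st t ∈ pipePath g c ∧ ((st t).2.1 : ℤ) - ((st t).1 : ℤ) = t) :
    (st ((g.n : ℤ) - e)).1 = e ∧ (st ((g.n : ℤ) - e)).2.1 = g.n ∧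
      outDir (g.tile e g.n) ((st ((g.n : ℤ) - e)).2.2) = some Dir.east := by
  obtain ⟨d', hm, hoD⟩ := trace_exit g _ _ _ _ _ hc2 he
  have h2 := st_eq g hn c e hc1 hc2 he st hst _ hm
  simp at h2
  rw [← h2]
  exact ⟨rfl, rfl, hoD⟩

/-- One step of the level function. -/
lemma step_lemma (g : Grid) (hn : 1 ≤ g.n) (c e : ℕ) (hc1 : 1 ≤ c) (hc2 : c ≤ g.n)
    (he : traceAux g (2 * g.n + 2) g.n c Dir.north = some e)
    (st : ℤ → ℕ × ℕ × Dir)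
    (hst : ∀ t : ℤ, (c : ℤ) - g.n ≤ t → t ≤ (g.n : ℤ) - e →
      st t ∈ pipePath g c ∧ ((st t).2.1 : ℤ) - ((st t).1 : ℤ) = t)
    (t : ℤ) (ht1 : (c : ℤ) - g.n ≤ t) (ht2 : t < (g.n : ℤ) - e) :
    (st (t + 1) = ((st t).1 - 1, (st t).2.1, Dir.north) ∧
      outDir (g.tile (st t).1 (st t).2.1) (st t).2.2 = some Dir.north ∧ 1 < (st t).1)
    ∨ (st (t + 1) = ((st t).1, (st t).2.1 + 1, Dir.east) ∧
      outDir (g.tile (st t).1 (st t).2.1) (st t).2.2 = some Dir.east ∧ (st t).2.1 < g.n) := by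
  obtain ⟨hmem, hmu⟩ := hst t ht1 (le_of_lt ht2)
  obtain ⟨i1, i2, i3, i4, _, _⟩ := path_inv g _ _ _ _ hn le_rfl hc1 hc2 _ hmem
  obtain ⟨f', hf'⟩ := trace_from g _ _ _ _ _ he _ hmem
  rcases f' with _ | f'
  · simp [traceAux] at hf'
  rcases hod : outDir (g.tile (st t).1 (st t).2.1) (st t).2.2 with _ | d'
  · rw [traceAux_succ_none f' hod] at hf'; cases hf'
  · cases d' with
    | north =>
      by_cases hx : (st t).1 ≤ 1
      · rw [traceAux_succ_stopN f' hod hx] at hf'; cases hf'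
      · left
        have hm := mem_succ_north hn hc1 hc2 hmem hod (lt_of_not_ge hx)
        refine ⟨?_, rfl, lt_of_not_ge hx⟩
        have h2 := st_eq g hn c e hc1 hc2 he st hst _ hm
        simp at h2
        have harg : ((st t).2.1 : ℤ) - (((st t).1 - 1 : ℕ) : ℤ) = t + 1 := by omega
        rw [harg] at h2
        exact h2.symm
    | east =>
      by_cases hy : g.n ≤ (st t).2.1
      · rw [traceAux_succ_stopE f' hod hy] at hf'
        simp at hf'
        exfalso; omega
      · right
        have hm := mem_succ_east hn hc1 hc2 hmem hod (lt_of_not_ge hy)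
        refine ⟨?_, rfl, lt_of_not_ge hy⟩
        have h2 := st_eq g hn c e hc1 hc2 he st hst _ hm
        simp at h2
        have harg : ((st t).2.1 : ℤ) + 1 - ((st t).1 : ℤ) = t + 1 := by omega
        rw [harg] at h2
        exact h2.symm

/-- A position shared by two distinct pipes is a crossing tile. -/
lemma shared_cross (g : Grid) (hn : 1 ≤ g.n)
    (hnb : ∀ i j, InGrid g i j → g.tile i j ≠ Tile.bump)
    (m M em eM x y : ℕ) (d1 d2 : Dir)
    (hm1 : 1 ≤ m) (hm2 : m ≤ g.n) (hM1 : 1 ≤ M) (hM2 : M ≤ g.n)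
    (hene : em ≠ eM)
    (hem : traceAux g (2 * g.n + 2) g.n m Dir.north = some em)
    (heM : traceAux g (2 * g.n + 2) g.n M Dir.north = some eM)
    (hsm : (x, y, d1) ∈ pipePath g m) (hsM : (x, y, d2) ∈ pipePath g M) :
    g.tile x y = Tile.cross := by
  obtain ⟨f1, hf1⟩ := trace_from g _ _ _ _ _ hem _ hsm
  obtain ⟨f2, hf2⟩ := trace_from g _ _ _ _ _ heM _ hsM
  simp only [] at hf1 hf2
  have hd : d1 ≠ d2 := by
    rintro rfl
    exact hene (trace_det g f1 f2 x y d1 em eM hf1 hf2)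
  have ho1 : outDir (g.tile x y) d1 ≠ none := by
    rcases f1 with _ | f1
    · simp [traceAux] at hf1
    · intro hnone; rw [traceAux_succ_none f1 hnone] at hf1; cases hf1
  have ho2 : outDir (g.tile x y) d2 ≠ none := by
    rcases f2 with _ | f2
    · simp [traceAux] at hf2
    · intro hnone; rw [traceAux_succ_none f2 hnone] at hf2; cases hf2
  obtain ⟨i1, i2, i3, i4, _, _⟩ := path_inv g _ _ _ _ hn le_rfl hm1 hm2 _ hsm
  simp only [] at i1 i2 i3 i4
  have hig : InGrid g x y := ⟨i1, i2, le_trans hm1 i3, i4⟩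
  have hboth : outDir (g.tile x y) Dir.north ≠ none ∧ outDir (g.tile x y) Dir.east ≠ none := by
    cases d1 <;> cases d2
    · exact absurd rfl hd
    · exact ⟨ho1, ho2⟩
    · exact ⟨ho2, ho1⟩
    · exact absurd rfl hd
  cases htile : g.tile x y with
  | blank => rw [htile] at hboth; simp [outDir] at hboth
  | vert => rw [htile] at hboth; simp [outDir] at hboth
  | horiz => rw [htile] at hboth; simp [outDir] at hboth
  | se => rw [htile] at hboth; simp [outDir] at hboth
  | nw => rw [htile] at hboth; simp [outDir] at hboth
  | cross => rfl
  | bump => exact absurd htile (hnb x y hig)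

/-- Two distinct shared positions of two pipes contradict the single-crossing property. -/
lemma no_second_shared (g : Grid) (hn : 1 ≤ g.n)
    (hnb : ∀ i j, InGrid g i j → g.tile i j ≠ Tile.bump)
    (hsub : ∀ c c', 1 ≤ c → c ≤ g.n → 1 ≤ c' → c' ≤ g.n → c ≠ c' →
      Set.Subsingleton {z : ℕ × ℕ | g.tile z.1 z.2 = Tile.cross ∧ passes g c z ∧ passes g c' z})
    (m M em eM : ℕ) (hm1 : 1 ≤ m) (hm2 : m ≤ g.n) (hM1 : 1 ≤ M) (hM2 : M ≤ g.n)
    (hmM : m ≠ M) (hene : em ≠ eM)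
    (hem : traceAux g (2 * g.n + 2) g.n m Dir.north = some em)
    (heM : traceAux g (2 * g.n + 2) g.n M Dir.north = some eM)
    (x y : ℕ) (dm dM : Dir)
    (hsm : (x, y, dm) ∈ pipePath g m) (hsM : (x, y, dM) ∈ pipePath g M)
    (s1 s2 : ℕ × ℕ × Dir) (h1 : s1 ∈ pipePath g m) (h2 : s2 ∈ pipePath g M)
    (hrow : s1.1 = s2.1) (hcol : s1.2.1 = s2.2.1)
    (hneq : (y : ℤ) - (x : ℤ) ≠ (s1.2.1 : ℤ) - (s1.1 : ℤ)) : False := by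
  have hcr0 : g.tile x y = Tile.cross :=
    shared_cross g hn hnb m M em eM x y dm dM hm1 hm2 hM1 hM2 hene hem heM hsm hsM
  have h2' : (s1.1, s1.2.1, s2.2.2) ∈ pipePath g M := by rw [hrow, hcol]; exact h2
  have hcr1 : g.tile s1.1 s1.2.1 = Tile.cross :=
    shared_cross g hn hnb m M em eM s1.1 s1.2.1 s1.2.2 s2.2.2 hm1 hm2 hM1 hM2 hene hem heM h1 h2'
  have hz := hsub m M hm1 hm2 hM1 hM2 hmM
    (show (x, y) ∈ _ from ⟨hcr0, ⟨dm, hsm⟩, ⟨dM, hsM⟩⟩)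
    (show (s1.1, s1.2.1) ∈ _ from ⟨hcr1, ⟨s1.2.2, h1⟩, ⟨s2.2.2, h2'⟩⟩)
  have hx := congrArg Prod.fst hz
  have hy := congrArg Prod.snd hz
  simp at hx hy
  omega


/-- If two pipes share a position, the pipe with the larger label exits strictly higher. -/
lemma inversion (v : Perm') (g : Grid) (hB : MemBPD v g)
    (m M : ℕ) (hm1 : 1 ≤ m) (hmM : m < M) (hM2 : M ≤ g.n)
    (x y : ℕ) (dm dM : Dir) (hd : dm ≠ dM)
    (hsm : (x, y, dm) ∈ pipePath g m) (hsM : (x, y, dM) ∈ pipePath g M) :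
    v.symm M < v.symm m := by
  obtain ⟨hb, hv0, hvout, hexit⟩ := hB
  obtain ⟨hn, hout, hnb, hSN, hEW, htop, hbot, hleft, hright, hsub⟩ := hb
  have hm2 : m ≤ g.n := by omega
  have hM1 : 1 ≤ M := by omega
  have hem : traceAux g (2 * g.n + 2) g.n m Dir.north = some (v.symm m) := hexit m hm1 hm2
  have heM : traceAux g (2 * g.n + 2) g.n M Dir.north = some (v.symm M) := hexit M hM1 hM2
  set em := v.symm m with hemdef
  set eM := v.symm M with heMdef
  have hene : em ≠ eM := by
    intro h
    have := v.symm.injective h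
    omega
  by_contra hcon
  push_neg at hcon
  have hemeM : em < eM := lt_of_le_of_ne hcon hene
  have hemn : em ≤ g.n := trace_le g _ _ _ _ _ hem
  have heMn : eM ≤ g.n := trace_le g _ _ _ _ _ heM
  have exm : ∀ t : ℤ, ∃ s : ℕ × ℕ × Dir,
      (m : ℤ) - g.n ≤ t → t ≤ (g.n : ℤ) - em →
        s ∈ pipePath g m ∧ (s.2.1 : ℤ) - (s.1 : ℤ) = t := by
    intro t
    by_cases h1 : (m : ℤ) - g.n ≤ t ∧ t ≤ (g.n : ℤ) - em
    · obtain ⟨s, hs, hmu⟩ :=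
        level_state g hn m em hm1 hm2 hem (t - ((m : ℤ) - g.n)).toNat (by omega)
      exact ⟨s, fun _ _ => ⟨hs, by omega⟩⟩
    · exact ⟨(1, 1, Dir.north), fun ha hb => absurd ⟨ha, hb⟩ h1⟩
  choose stm hstm using exm
  have exM : ∀ t : ℤ, ∃ s : ℕ × ℕ × Dir,
      (M : ℤ) - g.n ≤ t → t ≤ (g.n : ℤ) - eM →
        s ∈ pipePath g M ∧ (s.2.1 : ℤ) - (s.1 : ℤ) = t := by
    intro t
    by_cases h1 : (M : ℤ) - g.n ≤ t ∧ t ≤ (g.n : ℤ) - eM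
    · obtain ⟨s, hs, hmu⟩ :=
        level_state g hn M eM hM1 hM2 heM (t - ((M : ℤ) - g.n)).toNat (by omega)
      exact ⟨s, fun _ _ => ⟨hs, by omega⟩⟩
    · exact ⟨(1, 1, Dir.north), fun ha hb => absurd ⟨ha, hb⟩ h1⟩
  choose stM hstM using exM
  obtain ⟨j1, j2, j3, j4, _, _⟩ := path_inv g _ _ _ _ hn le_rfl hm1 hm2 _ hsm
  obtain ⟨k1, k2, k3, k4, _, _⟩ := path_inv g _ _ _ _ hn le_rfl hM1 hM2 _ hsM
  simp only [] at j1 j2 j3 j4 k1 k2 k3 k4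
  obtain ⟨fm, hfm⟩ := trace_from g _ _ _ _ _ hem _ hsm
  obtain ⟨fM, hfM⟩ := trace_from g _ _ _ _ _ heM _ hsM
  simp only [] at hfm hfM
  have hlem : em ≤ x := trace_le g _ _ _ _ _ hfm
  have hleM : eM ≤ x := trace_le g _ _ _ _ _ hfM
  have hstmt0 : stm ((y : ℤ) - x) = (x, y, dm) := by
    have h := st_eq g hn m em hm1 hm2 hem stm hstm _ hsm
    simp at h
    exact h.symm
  have hstMt0 : stM ((y : ℤ) - x) = (x, y, dM) := by
    have h := st_eq g hn M eM hM1 hM2 heM stM hstM _ hsM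
    simp at h
    exact h.symm
  have ht0M1 : (M : ℤ) - g.n ≤ (y : ℤ) - x := by omega
  have ht0M2 : (y : ℤ) - x ≤ (g.n : ℤ) - eM := by omega
  have hDstep : ∀ t : ℤ, (M : ℤ) - g.n ≤ t → t < (g.n : ℤ) - eM →
      (((stm (t + 1)).1 : ℤ) - ((stM (t + 1)).1 : ℤ) ≤
        ((stm t).1 : ℤ) - ((stM t).1 : ℤ) + 1 ∧
       ((stm t).1 : ℤ) - ((stM t).1 : ℤ) ≤
        ((stm (t + 1)).1 : ℤ) - ((stM (t + 1)).1 : ℤ) + 1) := by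
    intro t h1 h2
    have hA := step_lemma g hn m em hm1 hm2 hem stm hstm t (by omega) (by omega)
    have hB' := step_lemma g hn M eM hM1 hM2 heM stM hstM t h1 h2
    have hrm : ((stm (t + 1)).1 : ℤ) = (stm t).1 - 1 ∨ ((stm (t + 1)).1 : ℤ) = (stm t).1 := by
      rcases hA with ⟨h, _, hx1⟩ | ⟨h, _, _⟩
      · left; rw [h]; simp; omega
      · right; rw [h]
    have hrM : ((stM (t + 1)).1 : ℤ) = (stM t).1 - 1 ∨ ((stM (t + 1)).1 : ℤ) = (stM t).1 := by
      rcases hB' with ⟨h, _, hx1⟩ | ⟨h, _, _⟩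
      · left; rw [h]; simp; omega
      · right; rw [h]
    rcases hrm with h | h <;> rcases hrM with h' | h' <;> omega
  have hlo : ((stm ((M : ℤ) - g.n)).1 : ℤ) - ((stM ((M : ℤ) - g.n)).1 : ℤ) ≤ 0 := by
    have h1 := st_lo g hn M eM hM1 hM2 heM stM hstM
    obtain ⟨hmm, _⟩ := hstm ((M : ℤ) - g.n) (by omega) (by omega)
    obtain ⟨p1, p2, p3, p4, _, _⟩ := path_inv g _ _ _ _ hn le_rfl hm1 hm2 _ hmm
    have h2 : ((g.n, M, Dir.north) : ℕ × ℕ × Dir).1 = g.n := rfl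
    rw [h1, h2]
    omega
  have hhi : ((stm ((g.n : ℤ) - eM)).1 : ℤ) - ((stM ((g.n : ℤ) - eM)).1 : ℤ) ≤ 0 := by
    obtain ⟨e1, e2, e3⟩ := st_hi g hn M eM hM1 hM2 heM stM hstM
    obtain ⟨hmm, hmu2⟩ := hstm ((g.n : ℤ) - eM) (by omega) (by omega)
    obtain ⟨p1, p2, p3, p4, _, _⟩ := path_inv g _ _ _ _ hn le_rfl hm1 hm2 _ hmm
    rw [e1]
    omega
  cases dm with
  | north =>
    cases dM with
    | north => exact absurd rfl hd
    | east =>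
      have hne0 : (y : ℤ) - x ≠ (M : ℤ) - g.n := by
        intro h
        have h1 := st_lo g hn M eM hM1 hM2 heM stM hstM
        rw [← h, hstMt0] at h1
        simp at h1
      have hpm : ((stm ((y : ℤ) - x - 1)).1 : ℤ) = x + 1 := by
        have hs' := step_lemma g hn m em hm1 hm2 hem stm hstm ((y : ℤ) - x - 1)
          (by omega) (by omega)
        have heq : (y : ℤ) - x - 1 + 1 = (y : ℤ) - x := by ring
        rw [heq, hstmt0] at hs'
        rcases hs' with ⟨h, _, hx1⟩ | ⟨h, _, _⟩
        · have h5 := congrArg Prod.fst h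
          simp at h5 hx1
          omega
        · have h5 := congrArg (fun p : ℕ × ℕ × Dir => p.2.2) h
          simp at h5
      have hpM : ((stM ((y : ℤ) - x - 1)).1 : ℤ) = x := by
        have hs' := step_lemma g hn M eM hM1 hM2 heM stM hstM ((y : ℤ) - x - 1)
          (by omega) (by omega)
        have heq : (y : ℤ) - x - 1 + 1 = (y : ℤ) - x := by ring
        rw [heq, hstMt0] at hs'
        rcases hs' with ⟨h, _, _⟩ | ⟨h, _, _⟩
        · have h5 := congrArg (fun p : ℕ × ℕ × Dir => p.2.2) h
          simp at h5
        · have h5 := congrArg Prod.fst h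
          simp at h5
          omega
      obtain ⟨t1, ht11, ht12, ht13⟩ := ivt_neg_pos
        (fun t => ((stm t).1 : ℤ) - ((stM t).1 : ℤ)) ((M : ℤ) - g.n) ((y : ℤ) - x - 1)
        (by omega) (fun t h1 h2 => hDstep t h1 (by omega)) hlo
        (by show 0 < ((stm ((y : ℤ) - x - 1)).1 : ℤ) - ((stM ((y : ℤ) - x - 1)).1 : ℤ); omega)
      have ht13' : ((stm t1).1 : ℤ) - ((stM t1).1 : ℤ) = 0 := ht13
      obtain ⟨hmm1, hmu1⟩ := hstm t1 (by omega) (by omega)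
      obtain ⟨hmm2, hmu2⟩ := hstM t1 (by omega) (by omega)
      have hrow : (stm t1).1 = (stM t1).1 := by omega
      have hcol : (stm t1).2.1 = (stM t1).2.1 := by omega
      exact no_second_shared g hn hnb hsub m M em eM hm1 hm2 hM1 hM2 (by omega) hene hem heM
        x y Dir.north Dir.east hsm hsM (stm t1) (stM t1) hmm1 hmm2 hrow hcol (by omega)
  | east =>
    cases dM with
    | east => exact absurd rfl hd
    | north =>
      have hne0 : (y : ℤ) - x ≠ (g.n : ℤ) - eM := by
        intro h
        obtain ⟨e1, e2, e3⟩ := st_hi g hn M eM hM1 hM2 heM stM hstM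
        rw [← h, hstMt0] at e1 e2 e3
        simp at e1 e2 e3
        rcases fm with _ | fm
        · simp [traceAux] at hfm
        · rcases hodm : outDir (g.tile x y) Dir.east with _ | dd
          · rw [traceAux_succ_none fm hodm] at hfm; cases hfm
          · have e3' : outDir (g.tile x y) Dir.north = some Dir.east := by
              rw [e1, e2]; exact e3
            cases htile : g.tile x y with
            | se => rw [htile] at hodm; simp [outDir] at hodm
            | bump => exact hnb x y ⟨j1, j2, le_trans hm1 j3, j4⟩ htile
            | blank => rw [htile] at e3'; simp [outDir] at e3'
            | vert => rw [htile] at e3'; simp [outDir] at e3'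
            | horiz => rw [htile] at e3'; simp [outDir] at e3'
            | nw => rw [htile] at e3'; simp [outDir] at e3'
            | cross => rw [htile] at e3'; simp [outDir] at e3'
      have hcr0 : g.tile x y = Tile.cross := shared_cross g hn hnb m M em eM x y
        Dir.east Dir.north hm1 hm2 hM1 hM2 hene hem heM hsm hsM
      have hsucc_m : ((stm ((y : ℤ) - x + 1)).1 : ℤ) = x := by
        have hs' := step_lemma g hn m em hm1 hm2 hem stm hstm ((y : ℤ) - x)
          (by omega) (by omega)
        rw [hstmt0] at hs'
        rcases hs' with ⟨h, hodd, _⟩ | ⟨h, _, _⟩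
        · simp [hcr0, outDir] at hodd
        · have h5 := congrArg Prod.fst h
          simp at h5
          omega
      have hsucc_M : ((stM ((y : ℤ) - x + 1)).1 : ℤ) = x - 1 := by
        have hs' := step_lemma g hn M eM hM1 hM2 heM stM hstM ((y : ℤ) - x)
          ht0M1 (by omega)
        rw [hstMt0] at hs'
        rcases hs' with ⟨h, _, hx1⟩ | ⟨h, hodd, _⟩
        · have h5 := congrArg Prod.fst h
          simp at h5 hx1
          omega
        · simp [hcr0, outDir] at hodd
      obtain ⟨t1, ht11, ht12, ht13⟩ := ivt_pos_neg
        (fun t => ((stm t).1 : ℤ) - ((stM t).1 : ℤ)) ((y : ℤ) - x + 1) ((g.n : ℤ) - eM)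
        (by omega) (fun t h1 h2 => hDstep t (by omega) h2)
        (by show 0 < ((stm ((y : ℤ) - x + 1)).1 : ℤ) - ((stM ((y : ℤ) - x + 1)).1 : ℤ); omega)
        hhi
      have ht13' : ((stm t1).1 : ℤ) - ((stM t1).1 : ℤ) = 0 := ht13
      obtain ⟨hmm1, hmu1⟩ := hstm t1 (by omega) (by omega)
      obtain ⟨hmm2, hmu2⟩ := hstM t1 (by omega) (by omega)
      have hrow : (stm t1).1 = (stM t1).1 := by omega
      have hcol : (stm t1).2.1 = (stM t1).2.1 := by omega
      exact no_second_shared g hn hnb hsub m M em eM hm1 hm2 hM1 hM2 (by omega) hene hem heM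
        x y Dir.east Dir.north hsm hsM (stm t1) (stM t1) hmm1 hmm2 hrow hcol (by omega)


/-- Deriving a 2143 pattern. -/
lemma pattern_contra (v : Perm') (hv : Vexillary v) (m M r j x y : ℕ)
    (hm1 : 1 ≤ m) (hmM : m < M) (hMy : M ≤ y)
    (hinv : v.symm M < v.symm m) (hsymm_le : v.symm m ≤ x)
    (hxr : x ≤ r) (hrj : r < j) (hvj : v j < v r) (hyc : y ≤ v j) : False := by
  apply hv.2
  have hv0 : v 0 = 0 := hv.1.1
  refine ⟨v.symm M, v.symm m, r, j, ?_, hinv, ?_, hrj, ?_, ?_, hvj⟩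
  · rcases Nat.eq_zero_or_pos (v.symm M) with h0 | h
    · exfalso
      have : M = v 0 := by rw [← h0]; exact (v.apply_symm_apply M).symm
      omega
    · exact h
  · have hne : v.symm m ≠ r := by
      intro h
      have hmr : m = v r := by rw [← h]; exact (v.apply_symm_apply m).symm
      omega
    omega
  · rw [Equiv.apply_symm_apply, Equiv.apply_symm_apply]; exact hmM
  · rw [Equiv.apply_symm_apply]
    have hne : M ≠ v j := by
      intro h
      have : v.symm M = j := by rw [h]; exact v.symm_apply_apply j
      omega
    omega


/-- For `v` vexillary and `B ∈ BPD(v)`, the crossing tiles of `B` are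
disjoint from `Y_{ρ(v)}`, the Young diagram of the smallest partition containing `D_v`. -/
theorem stmt12 (v : Perm') (hv : Vexillary v) (B : Grid) (hB : MemBPD v B) :
    ∀ x y : ℕ, 1 ≤ x → 1 ≤ y → y ≤ rhoRow v x → B.tile x y ≠ Tile.cross := by
  intro x y hx1 hy1 hyr hc
  obtain ⟨hn, hout, hnb, hSN, hEW, htop, hbot, hleft, hright, hsub⟩ := hB.1
  have hin : InGrid B x y := by
    by_contra h
    rw [hout x y h] at hc
    cases hc
  obtain ⟨_, hx2, _, hy2⟩ := hin
  obtain ⟨hv00, hfin⟩ := hv.1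
  set S : Set ℕ := {c | ∃ r : ℕ, x ≤ r ∧ (r, c) ∈ RotheDiagram v} with hSdef
  have hbdd : BddAbove S := by
    refine ⟨(hfin.toFinset.image v).sup id, ?_⟩
    intro c hcS
    obtain ⟨r, hxr, hmem⟩ := hcS
    obtain ⟨hr1, j, hrj, hvj, hcc⟩ := hmem
    have hcc' : c = v j := hcc
    have hrj' : r < j := hrj
    have hvj' : v j < v r := hvj
    by_cases hjF : v j = j
    · by_cases hrF : v r = r
      · omega
      · have hrmem : r ∈ hfin.toFinset := by rw [Set.Finite.mem_toFinset]; exact hrF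
        have hmem2 : v r ∈ hfin.toFinset.image v := Finset.mem_image_of_mem v hrmem
        have hle : v r ≤ (hfin.toFinset.image v).sup id := Finset.le_sup (f := id) hmem2
        omega
    · have hjmem : j ∈ hfin.toFinset := by rw [Set.Finite.mem_toFinset]; exact hjF
      have hmem2 : v j ∈ hfin.toFinset.image v := Finset.mem_image_of_mem v hjmem
      have hle : v j ≤ (hfin.toFinset.image v).sup id := Finset.le_sup (f := id) hmem2
      omega
  have hne : S.Nonempty := by
    by_contra h
    rw [Set.not_nonempty_iff_eq_empty] at h
    have h0 : rhoRow v x = 0 := by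
      show sSup S = 0
      rw [h]
      exact csSup_empty
    omega
  have hmemS : rhoRow v x ∈ S := by
    show rhoRow v x ∈ S
    have : rhoRow v x = sSup S := rfl
    rw [this]
    exact Nat.sSup_mem hne hbdd
  obtain ⟨r, hxr, hrD⟩ := hmemS
  obtain ⟨hr1, j, hrj, hvj, hcc⟩ := hrD
  have hcc' : rhoRow v x = v j := hcc
  have hrj' : r < j := hrj
  have hvj' : v j < v r := hvj
  have hcov := coverage B hB.1 (y + B.n - x) x y hx1 hx2 hy1 hy2 (by omega)
  obtain ⟨a, ha1, ha2, hma⟩ := hcov.1 (by rw [hc]; rfl)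
  obtain ⟨b, hb1, hb2, hmb⟩ := hcov.2 (by rw [hc]; rfl)
  obtain ⟨_, _, ha3, _, _, _⟩ := path_inv B _ _ _ _ hn le_rfl ha1 ha2 _ hma
  obtain ⟨_, _, hb3, _, hb5, _⟩ := path_inv B _ _ _ _ hn le_rfl hb1 hb2 _ hmb
  have hblty : b < y := hb5 rfl rfl
  have ha3' : a ≤ y := ha3
  have hab : a ≠ b := by
    intro h
    subst h
    have h2 := mu_inj B _ _ _ _ hn le_rfl ha1 ha2 _ hma _ hmb rfl
    simp at h2
  have hexa : traceAux B (2 * B.n + 2) B.n a Dir.north = some (v.symm a) :=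
    hB.2.2.2 a ha1 ha2
  have hexb : traceAux B (2 * B.n + 2) B.n b Dir.north = some (v.symm b) :=
    hB.2.2.2 b hb1 hb2
  obtain ⟨fa, hfa⟩ := trace_from B _ _ _ _ _ hexa _ hma
  obtain ⟨fb, hfb⟩ := trace_from B _ _ _ _ _ hexb _ hmb
  have hsa : v.symm a ≤ x := trace_le B _ _ _ _ _ hfa
  have hsb : v.symm b ≤ x := trace_le B _ _ _ _ _ hfb
  rcases lt_or_gt_of_ne hab with hlt | hlt
  · have hinv := inversion v B hB a b ha1 hlt hb2 x y Dir.north Dir.east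
      (fun h => Dir.noConfusion h) hma hmb
    exact pattern_contra v hv a b r j x y ha1 hlt (by omega) hinv hsa hxr hrj' hvj' (by omega)
  · have hinv := inversion v B hB b a hb1 hlt ha2 x y Dir.east Dir.north
      (fun h => Dir.noConfusion h) hmb hma
    exact pattern_contra v hv b a r j x y hb1 hlt (by omega) hinv hsb hxr hrj' hvj' (by omega)

end BPDPaper
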